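/- Let c₃, ℭ be real constants with ℭ > 0, and u: ℝ → ℝ twice differentiable satisfying (u')² + e^{2u} + c₃²e^{-6u} = ℭ and e^{2u} < ℭ everywhere, and u'' + e^{2u} − 3c₃²e^{-6u} = 0. Define Q(z) = √(ℭ − e^{2u(z)}) · exp(i c₃ ∫₀^z e^{-u(s)}/(e^{2u(s)} − ℭ) ds). Then Q satisfies the ODE Q'(z)·(i c₃ − u'(z)e^{3u(z)}) = e^{5u(z)} Q(z). -/

import Mathlib

open Real Complex

/-- Q(z) = √(ℭ − e^{2u})·exp(i c₃ ∫₀^z e^{-u}/(e^{2u} − ℭ)) satisfies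
Q'·(i c₃ − u'e^{3u}) = e^{5u} Q. -/
theorem Q_ode (c₃ C : ℝ) (hC : 0 < C) (u u' u'' : ℝ → ℝ)
    (hu : ∀ z, HasDerivAt u (u' z) z)
    (hu' : ∀ z, HasDerivAt u' (u'' z) z)
    (heq : ∀ z, (u' z)^2 + Real.exp (2 * u z) + c₃^2 * Real.exp (-6 * u z) = C)
    (hlt : ∀ z, Real.exp (2 * u z) < C)
    (heq2 : ∀ z, u'' z + Real.exp (2 * u z) - 3 * c₃^2 * Real.exp (-6 * u z) = 0)
    (Q : ℝ → ℂ)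
    (hQ : ∀ z, Q z = (Real.sqrt (C - Real.exp (2 * u z)) : ℂ) *
      Complex.exp (Complex.I * c₃ *
        ∫ s in (0:ℝ)..z, ((Real.exp (-u s) / (Real.exp (2 * u s) - C)) : ℂ))) :
    ∀ z, deriv Q z * (Complex.I * c₃ - (u' z : ℂ) * Real.exp (3 * u z)) =
      (Real.exp (5 * u z) : ℂ) * Q z := by
  intro z
  set f : ℝ → ℂ := fun s => ((Real.exp (-u s) / (Real.exp (2 * u s) - C)) : ℂ) with hf
  have hucont' : Continuous u := by
    have : Differentiable ℝ u := fun x => (hu x).differentiableAt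
    exact this.continuous
  have hdenom : ∀ s, Real.exp (2 * u s) - C ≠ 0 := fun s => sub_ne_zero.mpr (ne_of_lt (hlt s))
  have hfc : Continuous f := by
    apply Continuous.div
    · exact Complex.continuous_ofReal.comp (Real.continuous_exp.comp hucont'.neg)
    · exact ((Complex.continuous_ofReal.comp (Real.continuous_exp.comp (continuous_const.mul hucont'))).sub continuous_const)
    · intro x
      rw [← Complex.ofReal_sub]; exact Complex.ofReal_ne_zero.mpr (hdenom x)
  -- derivative of the integral
  have hF : HasDerivAt (fun z => ∫ s in (0:ℝ)..z, f s) (f z) z :=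
    intervalIntegral.integral_hasDerivAt_right (hfc.intervalIntegrable _ _)
      hfc.aestronglyMeasurable.stronglyMeasurableAtFilter hfc.continuousAt
  -- derivative of exp part
  set B : ℝ → ℂ := fun z => Complex.exp (Complex.I * c₃ * ∫ s in (0:ℝ)..z, f s) with hB
  have hBd : HasDerivAt B (Complex.I * c₃ * f z * B z) z := by
    have := ((hF.const_mul (Complex.I * c₃)).cexp)
    simpa [hB, mul_comm] using this
  -- derivative of sqrt part
  set s := Real.sqrt (C - Real.exp (2 * u z)) with hsdef
  have hspos : 0 < C - Real.exp (2 * u z) := sub_pos.mpr (hlt z)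
  have hs0 : s ≠ 0 := ne_of_gt (Real.sqrt_pos.mpr hspos)
  have hssq : s ^ 2 = C - Real.exp (2 * u z) := Real.sq_sqrt hspos.le
  have hinner : HasDerivAt (fun z => C - Real.exp (2 * u z))
      (-(2 * u' z * Real.exp (2 * u z))) z := by
    have : HasDerivAt (fun z => Real.exp (2 * u z)) (2 * u' z * Real.exp (2 * u z)) z := by
      have := ((hu z).const_mul 2).exp
      simpa [mul_comm, mul_assoc, mul_left_comm] using this
    have h := (hasDerivAt_const z C).sub this; rw [zero_sub] at h; exact h
  have hA : HasDerivAt (fun z => Real.sqrt (C - Real.exp (2 * u z)))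
      (-(2 * u' z * Real.exp (2 * u z)) / (2 * s)) z := by
    have := (Real.hasDerivAt_sqrt (ne_of_gt hspos)).comp z hinner
    simpa [hsdef, div_eq_mul_inv, mul_comm, Function.comp_def] using this
  have hAc : HasDerivAt (fun z => ((Real.sqrt (C - Real.exp (2 * u z)) : ℝ) : ℂ))
      ((-(2 * u' z * Real.exp (2 * u z)) / (2 * s) : ℝ) : ℂ) z := hA.ofReal_comp
  have hQd : HasDerivAt Q
      (((-(2 * u' z * Real.exp (2 * u z)) / (2 * s) : ℝ) : ℂ) * B z
        + (s : ℂ) * (Complex.I * c₃ * f z * B z)) z := by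
    have h := hAc.mul hBd
    refine HasDerivAt.congr_of_eventuallyEq h ?_
    filter_upwards with x
    rw [hQ x]; rfl
  rw [hQd.deriv, hQ z]
  set E : ℂ := Complex.exp ((u z : ℝ) : ℂ) with hEdef
  have hE0 : E ≠ 0 := Complex.exp_ne_zero _
  have cast_exp : ∀ r : ℝ, ((Real.exp r : ℝ) : ℂ) = Complex.exp (r : ℂ) := fun r =>
    Complex.ofReal_exp r
  have hpow : ∀ n : ℕ, Complex.exp ((n : ℂ) * ((u z : ℝ) : ℂ)) = E ^ n := fun n =>
    Complex.exp_nat_mul _ n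
  have hE2 : ((Real.exp (2 * u z) : ℝ) : ℂ) = E^2 := by
    rw [cast_exp]; push_cast; have h := hpow 2; push_cast at h; exact h
  have hE3 : ((Real.exp (3 * u z) : ℝ) : ℂ) = E^3 := by
    rw [cast_exp]; push_cast; have h := hpow 3; push_cast at h; exact h
  have hE5 : ((Real.exp (5 * u z) : ℝ) : ℂ) = E^5 := by
    rw [cast_exp]; push_cast; have h := hpow 5; push_cast at h; exact h
  have hEm1 : ((Real.exp (-u z) : ℝ) : ℂ) = E⁻¹ := by
    rw [cast_exp]; push_cast; rw [Complex.exp_neg]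
  have hEm6 : ((Real.exp (-6 * u z) : ℝ) : ℂ) = (E^6)⁻¹ := by
    rw [cast_exp]; push_cast
    rw [neg_mul, Complex.exp_neg]
    congr 1
    have h := hpow 6; push_cast at h; exact h
  have hfz : f z = E⁻¹ / (E^2 - (C : ℂ)) := by
    simp only [hf, Complex.ofReal_div, Complex.ofReal_sub, hEm1, hE2]
  have hsC : ((s : ℂ))^2 = (C : ℂ) - E^2 := by
    rw [← hE2, ← Complex.ofReal_pow, hssq]; push_cast; ring
  have hup : ((u' z : ℂ))^2 = (s : ℂ)^2 - (c₃ : ℂ)^2 * (E^6)⁻¹ := by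
    have h1 : (u' z)^2 = (C - Real.exp (2 * u z)) - c₃^2 * Real.exp (-6 * u z) := by
      have := heq z; linarith
    calc ((u' z : ℂ))^2 = (((u' z)^2 : ℝ) : ℂ) := by push_cast; ring
      _ = (((C - Real.exp (2 * u z)) - c₃^2 * Real.exp (-6 * u z) : ℝ) : ℂ) := by rw [h1]
      _ = (s : ℂ)^2 - (c₃ : ℂ)^2 * (E^6)⁻¹ := by
          push_cast [hEm6, hsC, hE2]; ring
  have hs0' : (s : ℂ) ≠ 0 := Complex.ofReal_ne_zero.mpr hs0
  have harg : (((-(2 * u' z * Real.exp (2 * u z)) / (2 * s)) : ℝ) : ℂ)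
      = -((u' z : ℂ) * E^2) / (s : ℂ) := by
    push_cast [hE2]; field_simp
  rw [hfz, harg, hE3, hE5]
  have hsub : E^2 - (C : ℂ) = -((s : ℂ)^2) := by rw [hsC]; ring
  rw [hsub]
  have hup6 : ((u' z : ℂ))^2 * E^6 = (s : ℂ)^2 * E^6 - (c₃ : ℂ)^2 := by
    rw [hup]; field_simp
  rw [show Real.sqrt (C - Real.exp (2 * u z)) = s from hsdef.symm,
    show Complex.exp (Complex.I * (c₃:ℂ) * ∫ s in (0:ℝ)..z, f s) = B z from rfl]
  field_simp
  linear_combination (B z) * hup6 - (B z * (c₃:ℂ)^2) * Complex.I_sq
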